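/- For every vertex x of G and every natural number t, the sum of the coordinates s_t(x)(z) over all vertices z with d(x,z) ≢ t (mod 2) equals the Fibonacci number f(2t). -/

import Mathlib

open scoped Classical

/-- `Φ⁻ₓ`: apply the reflection at every vertex at odd distance from `x`. -/
noncomputable def phiOdd {V : Type*} (G : SimpleGraph V) (x : V) (a : V → ℤ) : V → ℤ :=
  fun z => if Odd (G.dist x z) then -a z + ∑ᶠ w ∈ G.neighborSet z, a w else a z

/-- `Φ⁺ₓ`: apply the reflection at every vertex at even distance from `x`. -/
noncomputable def phiEven {V : Type*} (G : SimpleGraph V) (x : V) (a : V → ℤ) : V → ℤ :=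
  fun z => if Even (G.dist x z) then -a z + ∑ᶠ w ∈ G.neighborSet z, a w else a z

/-- The Fibonacci vectors `s_t(x)`: `s_0(x) = δ_x`, `s_{t+1}(x) = Φ⁻ₓ s_t(x)` for even `t`
and `s_{t+1}(x) = Φ⁺ₓ s_t(x)` for odd `t`. -/
noncomputable def sVec {V : Type*} (G : SimpleGraph V) (x : V) : ℕ → V → ℤ
  | 0 => fun z => if z = x then 1 else 0
  | t + 1 => if Even t then phiOdd G x (sVec G x t) else phiEven G x (sVec G x t)

/-- The Fibonacci vectors `r_t(x,y)`: `r_0(x,y) = δ_x + δ_y`, `r_{t+1}(x,y) = Φ⁻ₓ r_t(x,y)`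
for even `t` and `r_{t+1}(x,y) = Φ⁺ₓ r_t(x,y)` for odd `t`. -/
noncomputable def rVec {V : Type*} (G : SimpleGraph V) (x y : V) : ℕ → V → ℤ
  | 0 => fun z => (if z = x then 1 else 0) + (if z = y then 1 else 0)
  | t + 1 => if Even t then phiOdd G x (rVec G x y t) else phiEven G x (rVec G x y t)


section Aux

variable {V : Type*} {G : SimpleGraph V}

lemma nbFinite (hreg : ∀ v : V, (G.neighborSet v).ncard = 3) (v : V) :
    (G.neighborSet v).Finite := by
  by_contra h
  have h2 : (G.neighborSet v).Infinite := by exact h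
  have := h2.ncard
  rw [hreg v] at this
  omega

lemma ballFinite (hconn : G.Connected) (hnb : ∀ v : V, (G.neighborSet v).Finite) (x : V) :
    ∀ n : ℕ, {z : V | G.dist x z ≤ n}.Finite
  | 0 => by
      apply Set.Finite.subset (Set.finite_singleton x)
      intro z hz
      simp only [Set.mem_setOf_eq, Nat.le_zero] at hz
      simp [(hconn.dist_eq_zero_iff.mp hz).symm]
  | (n+1) => by
      have IH := ballFinite hconn hnb x n
      apply Set.Finite.subset (IH.union (IH.biUnion (fun w _ => hnb w)))
      intro z hz
      simp only [Set.mem_setOf_eq] at hz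
      by_cases h : G.dist x z ≤ n
      · exact Or.inl h
      · right
        have hne : G.dist z x ≠ 0 := by rw [SimpleGraph.dist_comm]; omega
        obtain ⟨q, hq⟩ := SimpleGraph.exists_walk_of_dist_ne_zero hne
        cases q with
        | nil => simp at hq; simp only [SimpleGraph.dist_self] at h; omega
        | cons h' q' =>
          rename_i b
          refine Set.mem_biUnion (s := {z : V | G.dist x z ≤ n}) ?_ h'.symm
          have h1 : G.dist b x ≤ q'.length := SimpleGraph.dist_le q'
          simp only [SimpleGraph.Walk.length_cons] at hq
          simp only [Set.mem_setOf_eq]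
          have e1 : G.dist x b = G.dist b x := SimpleGraph.dist_comm
          have e2 : G.dist z x = G.dist x z := SimpleGraph.dist_comm
          omega

lemma adj_parity (hconn : G.Connected) (hacyc : G.IsAcyclic) (x : V) {z w : V}
    (h : G.Adj z w) : G.dist x z % 2 ≠ G.dist x w % 2 := by
  have hzw : G.dist z w = 1 := SimpleGraph.dist_eq_one_iff_adj.mpr h
  have hwz : G.dist w z = 1 := SimpleGraph.dist_eq_one_iff_adj.mpr h.symm
  have h1 : G.dist x w ≤ G.dist x z + 1 := by
    have := hconn.dist_triangle (u := x) (v := z) (w := w); omega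
  have h2 : G.dist x z ≤ G.dist x w + 1 := by
    have := hconn.dist_triangle (u := x) (v := w) (w := z); omega
  have hne : G.dist x z ≠ G.dist x w := by
    intro he
    obtain ⟨p, hp, hpl⟩ := hconn.exists_path_of_dist x z
    obtain ⟨q, hq, hql⟩ := hconn.exists_path_of_dist x w
    by_cases hw : w ∈ p.support
    · have hsp := p.take_spec hw
      have hlen : (p.takeUntil w hw).length + (p.dropUntil w hw).length = p.length := by
        rw [← SimpleGraph.Walk.length_append, hsp]
      have hd1 : G.dist x w ≤ (p.takeUntil w hw).length := SimpleGraph.dist_le _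
      have hd2 : G.dist w z ≤ (p.dropUntil w hw).length := SimpleGraph.dist_le _
      omega
    · have hp' : (SimpleGraph.Walk.cons h.symm p.reverse).IsPath := by
        rw [SimpleGraph.Walk.cons_isPath_iff]
        refine ⟨hp.reverse, ?_⟩
        simpa [SimpleGraph.Walk.support_reverse] using hw
      have hu := hacyc.path_unique ⟨_, hp'⟩ ⟨q.reverse, hq.reverse⟩
      have hl := congrArg (fun r : G.Path w x => r.1.length) hu
      simp only [SimpleGraph.Walk.length_cons, SimpleGraph.Walk.length_reverse] at hl
      omega
  omega

lemma sVecSupp (hconn : G.Connected) (x : V) :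
    ∀ t : ℕ, ∀ z : V, t < G.dist x z → sVec G x t z = 0
  | 0, z, h => by
      simp only [sVec]
      rw [if_neg]
      intro hzx
      rw [hzx, SimpleGraph.dist_self] at h
      omega
  | (t+1), z, h => by
      have hz : sVec G x t z = 0 := sVecSupp hconn x t z (by omega)
      have hw : (∑ᶠ w ∈ G.neighborSet z, sVec G x t w) = 0 := by
        apply finsum_mem_of_eqOn_zero
        intro w hwz
        apply sVecSupp hconn x t
        have hwz1 : G.dist w z = 1 := SimpleGraph.dist_eq_one_iff_adj.mpr
          ((SimpleGraph.mem_neighborSet _ _ _).mp hwz).symm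
        have := hconn.dist_triangle (u := x) (v := w) (w := z)
        omega
      simp only [sVec]
      split <;> simp only [phiOdd, phiEven] <;> split <;>
        first
        | (rw [hz, hw]; ring)
        | exact hz

lemma finsum_mem_eq_filter_sum (g : V → ℤ) (S : Set V) (F : Finset V)
    [DecidablePred (· ∈ S)] (h : ∀ z, g z ≠ 0 → z ∈ F) :
    ∑ᶠ z ∈ S, g z = ∑ z ∈ F.filter (· ∈ S), g z := by
  apply finsum_mem_eq_sum_of_inter_support_eq
  ext z
  simp only [Set.mem_inter_iff, Function.mem_support, Finset.coe_filter, Set.mem_setOf_eq]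
  constructor
  · rintro ⟨hS, hg⟩; exact ⟨⟨h z hg, hS⟩, hg⟩
  · rintro ⟨⟨_, hS⟩, hg⟩; exact ⟨hS, hg⟩

end Aux


/-- The sum of the coordinates `s_t(x)(z)` over all vertices `z` with
`d(x,z) ≢ t (mod 2)` equals the Fibonacci number `f (2t)`, where `f` is the extended
Fibonacci sequence. -/
theorem sVec_sum_ne_parity (f : ℤ → ℤ) (h0 : f 0 = 0) (h1 : f 1 = 1)
    (hrec : ∀ n : ℤ, f (n + 1) = f n + f (n - 1))
    (V : Type*) (G : SimpleGraph V) (hconn : G.Connected)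
    (hacyc : G.IsAcyclic) (hreg : ∀ v : V, (G.neighborSet v).ncard = 3)
    (x : V) (t : ℕ) :
    ∑ᶠ z ∈ {z : V | ¬ G.dist x z % 2 = t % 2}, sVec G x t z = f (2 * t) := by
  have hnb := nbFinite hreg
  have hball := ballFinite hconn hnb x
  have hsupp := sVecSupp hconn x
  have hfib : ∀ n : ℤ, f (n + 2) = 3 * f n - f (n - 2) := by
    intro n
    have e1 : f (n + 2) = f (n + 1) + f n := by
      have h := hrec (n + 1)
      rw [show n + 1 + 1 = n + 2 by ring, show n + 1 - 1 = n by ring] at h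
      exact h
    have e2 := hrec n
    have e3 : f n = f (n - 1) + f (n - 2) := by
      have h := hrec (n - 1)
      rw [show n - 1 + 1 = n by ring, show n - 1 - 1 = n - 2 by ring] at h
      exact h
    linarith
  have key : ∀ t : ℕ,
      (∑ᶠ z ∈ {z : V | G.dist x z % 2 = (t + 1) % 2}, sVec G x t z) = f (2 * t)
      ∧ (∑ᶠ z ∈ {z : V | G.dist x z % 2 = t % 2}, sVec G x t z) = f (2 * t + 2) := by
    intro t
    induction t with
    | zero =>
      constructor
      · rw [show ((2 : ℤ) * ((0 : ℕ) : ℤ)) = 0 by norm_num, h0]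
        apply finsum_mem_of_eqOn_zero
        intro z hz
        simp only [Set.mem_setOf_eq] at hz
        show sVec G x 0 z = (0 : ℤ)
        simp only [sVec]
        rw [if_neg]
        intro hzx
        rw [hzx, SimpleGraph.dist_self] at hz
        omega
      · have hf2 : f 2 = 1 := by
          have h := hrec 1
          norm_num at h
          rw [h0, h1] at h
          linarith
        rw [show ((2 : ℤ) * ((0 : ℕ) : ℤ) + 2) = 2 by norm_num, hf2]
        rw [finsum_mem_eq_filter_sum (sVec G x 0) _ {x} ?_]
        · rw [Finset.filter_singleton, if_pos (by simp [SimpleGraph.dist_self])]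
          simp [sVec]
        · intro z hz
          rw [Finset.mem_singleton]
          by_contra hne
          exact hz (by simp [sVec, hne])
    | succ t ih =>
      obtain ⟨ihB, ihA⟩ := ih
      have hunch : ∀ z ∈ {z : V | G.dist x z % 2 = t % 2},
          sVec G x (t + 1) z = sVec G x t z := by
        intro z hz
        simp only [Set.mem_setOf_eq] at hz
        simp only [sVec]
        by_cases he : Even t
        · rw [if_pos he]
          simp only [phiOdd]
          rw [if_neg]
          rw [Nat.odd_iff]
          rw [Nat.even_iff] at he
          omega
        · rw [if_neg he]
          simp only [phiEven]
          rw [if_neg]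
          rw [Nat.even_iff]
          rw [Nat.not_even_iff] at he
          omega
      have hch : ∀ z ∈ {z : V | G.dist x z % 2 = (t + 1) % 2},
          sVec G x (t + 1) z = -sVec G x t z + ∑ᶠ w ∈ G.neighborSet z, sVec G x t w := by
        intro z hz
        simp only [Set.mem_setOf_eq] at hz
        simp only [sVec]
        by_cases he : Even t
        · rw [if_pos he]
          simp only [phiOdd]
          rw [if_pos]
          rw [Nat.odd_iff]
          rw [Nat.even_iff] at he
          omega
        · rw [if_neg he]
          simp only [phiEven]
          rw [if_pos]
          rw [Nat.even_iff]
          rw [Nat.not_even_iff] at he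
          omega
      constructor
      · -- B (t+1) = A t
        rw [show {z : V | G.dist x z % 2 = (t + 1 + 1) % 2}
            = {z : V | G.dist x z % 2 = t % 2} from by
          ext z; simp only [Set.mem_setOf_eq]; omega]
        rw [finsum_mem_congr rfl hunch]
        rw [show ((2 : ℤ) * ((t + 1 : ℕ) : ℤ)) = 2 * t + 2 by push_cast; ring]
        exact ihA
      · -- A (t+1) = 3 * A t - B t
        have hsupp0 : ∀ z, sVec G x t z ≠ 0 → z ∈ (hball t).toFinset := by
          intro z hz
          rw [Set.Finite.mem_toFinset]
          simp only [Set.mem_setOf_eq]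
          by_contra h
          exact hz (hsupp t z (by omega))
        have hg2supp : ∀ z, (∑ᶠ w ∈ G.neighborSet z, sVec G x t w) ≠ 0 →
            z ∈ (hball (t + 1)).toFinset := by
          intro z hz
          rw [Set.Finite.mem_toFinset]
          simp only [Set.mem_setOf_eq]
          by_contra h
          apply hz
          apply finsum_mem_of_eqOn_zero
          intro w hw
          apply hsupp t w
          have hwz1 : G.dist w z = 1 := SimpleGraph.dist_eq_one_iff_adj.mpr
            ((SimpleGraph.mem_neighborSet _ _ _).mp hw).symm
          have := hconn.dist_triangle (u := x) (v := w) (w := z)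
          omega
        rw [finsum_mem_congr rfl hch]
        rw [finsum_mem_add_distrib'
          (Set.Finite.inter_of_right (Set.Finite.subset (hball t) (fun z hz => by
            simp only [Function.mem_support, neg_ne_zero] at hz
            have := hsupp0 z hz
            rwa [Set.Finite.mem_toFinset] at this)) _)
          (Set.Finite.inter_of_right (Set.Finite.subset (hball (t + 1)) (fun z hz => by
            simp only [Function.mem_support] at hz
            have := hg2supp z hz
            rwa [Set.Finite.mem_toFinset] at this)) _)]
        have hpart1 : (∑ᶠ z ∈ {z : V | G.dist x z % 2 = (t + 1) % 2}, -sVec G x t z)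
            = -f (2 * t) := by
          rw [finsum_mem_eq_filter_sum (fun z => -sVec G x t z)
            {z : V | G.dist x z % 2 = (t + 1) % 2} (hball t).toFinset
            (fun z hz => hsupp0 z (by simpa using hz))]
          rw [show (∑ z ∈ ((hball t).toFinset).filter
              (· ∈ {z : V | G.dist x z % 2 = (t + 1) % 2}), -sVec G x t z)
            = -∑ z ∈ ((hball t).toFinset).filter
              (· ∈ {z : V | G.dist x z % 2 = (t + 1) % 2}), sVec G x t z from
            Finset.sum_neg_distrib _]
          rw [← finsum_mem_eq_filter_sum (sVec G x t)
            {z : V | G.dist x z % 2 = (t + 1) % 2} (hball t).toFinset hsupp0, ihB]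
        have hg2eq : ∀ z : V, (∑ᶠ w ∈ G.neighborSet z, sVec G x t w)
            = ∑ w ∈ (hball t).toFinset, if G.Adj z w then sVec G x t w else 0 := by
          intro z
          rw [finsum_mem_eq_sum_of_inter_support_eq _
            (t := ((hball t).toFinset).filter (fun w => G.Adj z w)), Finset.sum_filter]
          ext w
          simp only [Set.mem_inter_iff, SimpleGraph.mem_neighborSet, Function.mem_support,
            Finset.coe_filter, Set.mem_setOf_eq]
          constructor
          · rintro ⟨ha, hw⟩; exact ⟨⟨hsupp0 w hw, ha⟩, hw⟩
          · rintro ⟨⟨_, ha⟩, hw⟩; exact ⟨ha, hw⟩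
        have hpart2 : (∑ᶠ z ∈ {z : V | G.dist x z % 2 = (t + 1) % 2},
              ∑ᶠ w ∈ G.neighborSet z, sVec G x t w) = 3 * f (2 * t + 2) := by
          calc (∑ᶠ z ∈ {z : V | G.dist x z % 2 = (t + 1) % 2},
                  ∑ᶠ w ∈ G.neighborSet z, sVec G x t w)
              = ∑ z ∈ ((hball (t + 1)).toFinset).filter
                (· ∈ {z : V | G.dist x z % 2 = (t + 1) % 2}),
                  ∑ᶠ w ∈ G.neighborSet z, sVec G x t w :=
                finsum_mem_eq_filter_sum _
                  {z : V | G.dist x z % 2 = (t + 1) % 2} ((hball (t + 1)).toFinset) hg2supp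
            _ = ∑ z ∈ ((hball (t + 1)).toFinset).filter
                  (· ∈ {z : V | G.dist x z % 2 = (t + 1) % 2}),
                  ∑ w ∈ (hball t).toFinset, if G.Adj z w then sVec G x t w else 0 := by
                exact Finset.sum_congr rfl (fun z _ => hg2eq z)
            _ = ∑ w ∈ (hball t).toFinset,
                  ∑ z ∈ ((hball (t + 1)).toFinset).filter
                    (· ∈ {z : V | G.dist x z % 2 = (t + 1) % 2}),
                    if G.Adj z w then sVec G x t w else 0 := Finset.sum_comm
            _ = ∑ w ∈ (hball t).toFinset,
                  3 * (if G.dist x w % 2 = t % 2 then sVec G x t w else 0) := by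
                apply Finset.sum_congr rfl
                intro w _
                rw [← Finset.sum_filter]
                by_cases hw0 : sVec G x t w = 0
                · simp [hw0]
                · have hwt : G.dist x w ≤ t := by
                    by_contra h
                    exact hw0 (hsupp t w (by omega))
                  by_cases hpar : G.dist x w % 2 = t % 2
                  · rw [if_pos hpar]
                    have hfil : (((hball (t + 1)).toFinset).filter
                        (· ∈ {z : V | G.dist x z % 2 = (t + 1) % 2})).filter
                          (fun z => G.Adj z w) = (hnb w).toFinset := by
                      ext z
                      simp only [Finset.mem_filter, Set.Finite.mem_toFinset,
                        Set.mem_setOf_eq, SimpleGraph.mem_neighborSet]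
                      constructor
                      · rintro ⟨⟨_, _⟩, ha⟩; exact ha.symm
                      · intro ha
                        have hp := adj_parity hconn hacyc x ha
                        have hzw1 : G.dist w z = 1 := SimpleGraph.dist_eq_one_iff_adj.mpr ha
                        have htr := hconn.dist_triangle (u := x) (v := w) (w := z)
                        exact ⟨⟨by omega, by omega⟩, ha.symm⟩
                    rw [hfil, Finset.sum_const]
                    have hc : (hnb w).toFinset.card = 3 := by
                      rw [← Set.ncard_eq_toFinset_card _ (hnb w)]
                      exact hreg w
                    rw [hc]
                    push_cast
                    ring
                  · rw [if_neg hpar]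
                    have hfil : (((hball (t + 1)).toFinset).filter
                        (· ∈ {z : V | G.dist x z % 2 = (t + 1) % 2})).filter
                          (fun z => G.Adj z w) = ∅ := by
                      ext z
                      simp only [Finset.mem_filter, Set.Finite.mem_toFinset,
                        Set.mem_setOf_eq, Finset.notMem_empty, iff_false, not_and]
                      rintro ⟨_, hz⟩ ha
                      have hp := adj_parity hconn hacyc x ha
                      omega
                    rw [hfil]
                    simp
            _ = 3 * ∑ w ∈ ((hball t).toFinset).filter
                  (· ∈ {z : V | G.dist x z % 2 = t % 2}), sVec G x t w := by
                rw [Finset.mul_sum, Finset.sum_filter]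
                apply Finset.sum_congr rfl
                intro w _
                simp only [Set.mem_setOf_eq, mul_ite, mul_zero]
            _ = 3 * f (2 * t + 2) := by
                rw [← finsum_mem_eq_filter_sum (sVec G x t)
                  {z : V | G.dist x z % 2 = t % 2} (hball t).toFinset hsupp0, ihA]
        rw [hpart1, hpart2]
        rw [show ((2 : ℤ) * ((t + 1 : ℕ) : ℤ) + 2) = (2 * t + 2) + 2 by push_cast; ring]
        rw [hfib (2 * t + 2)]
        rw [show ((2 : ℤ) * t + 2 - 2) = 2 * t by ring]
        ring
  rw [show {z : V | ¬ G.dist x z % 2 = t % 2}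
      = {z : V | G.dist x z % 2 = (t + 1) % 2} from by
    ext z; simp only [Set.mem_setOf_eq]; omega]
  exact (key t).1
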